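/- arXiv:1212.6878 — 2 statements merged into one kernel-verified Lean document; each statement's English description precedes it below -/
import Mathlib

section
/- Let W₁ be a k-dimensional complex vector space and (a₁,a₂,b,c) a nondegenerate ADHM datum. Then the stabilizer of (a₁,a₂,b,c) in GL(W₁) is trivial: if g ∈ GL(W₁) satisfies g a₁ g⁻¹ = a₁, g a₂ g⁻¹ = a₂, g b = b, c g⁻¹ = c, then g = 1. -/
open Module

/-- Nondegeneracy of an ADHM datum `(a₁,a₂,b,c)`. -/
def ADHMNondeg {V W : Type*} [AddCommGroup V] [Module ℂ V] [AddCommGroup W] [Module ℂ W]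
    (a₁ a₂ : W →ₗ[ℂ] W) (b : V →ₗ[ℂ] W) (c : W →ₗ[ℂ] V) : Prop :=
  (∀ U : Submodule ℂ W, LinearMap.range b ≤ U → Submodule.map a₁ U ≤ U →
      Submodule.map a₂ U ≤ U → U = ⊤) ∧
  (∀ U : Submodule ℂ W, U ≤ LinearMap.ker c → Submodule.map a₁ U ≤ U →
      Submodule.map a₂ U ≤ U → U = ⊥)

/-- The stabilizer of a nondegenerate ADHM datum in `GL(W₁)` is trivial: if
`g a₁ g⁻¹ = a₁`, `g a₂ g⁻¹ = a₂`, `g b = b` and `c g⁻¹ = c` then `g = 1`. -/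
theorem adhm_stabilizer_trivial
    {V W : Type*} [AddCommGroup V] [Module ℂ V] [AddCommGroup W] [Module ℂ W]
    (a₁ a₂ : W →ₗ[ℂ] W) (b : V →ₗ[ℂ] W) (c : W →ₗ[ℂ] V)
    (hint : a₁ ∘ₗ a₂ - a₂ ∘ₗ a₁ + b ∘ₗ c = 0)
    (hnd : ADHMNondeg a₁ a₂ b c)
    (g : W ≃ₗ[ℂ] W)
    (hg₁ : (g : W →ₗ[ℂ] W) ∘ₗ a₁ ∘ₗ (g.symm : W →ₗ[ℂ] W) = a₁)
    (hg₂ : (g : W →ₗ[ℂ] W) ∘ₗ a₂ ∘ₗ (g.symm : W →ₗ[ℂ] W) = a₂)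
    (hgb : (g : W →ₗ[ℂ] W) ∘ₗ b = b)
    (hgc : c ∘ₗ (g.symm : W →ₗ[ℂ] W) = c) :
    g = LinearEquiv.refl ℂ W := by
  -- g commutes with a₁ and a₂
  have comm₁ : ∀ x : W, g (a₁ x) = a₁ (g x) := by
    intro x
    have := congrArg (fun f : W →ₗ[ℂ] W => f (g x)) hg₁
    simpa using this
  have comm₂ : ∀ x : W, g (a₂ x) = a₂ (g x) := by
    intro x
    have := congrArg (fun f : W →ₗ[ℂ] W => f (g x)) hg₂
    simpa using this
  set U : Submodule ℂ W := LinearMap.ker ((g : W →ₗ[ℂ] W) - LinearMap.id) with hU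
  have hmem : ∀ x : W, x ∈ U ↔ g x = x := by
    intro x
    simp [hU, LinearMap.mem_ker, sub_eq_zero]
  have hb : LinearMap.range b ≤ U := by
    rintro _ ⟨v, rfl⟩
    rw [hmem]
    have := congrArg (fun f : V →ₗ[ℂ] W => f v) hgb
    simpa using this
  have h1 : Submodule.map a₁ U ≤ U := by
    rintro _ ⟨x, hx, rfl⟩
    have hx' : g x = x := (hmem x).mp hx
    rw [hmem, comm₁, hx']
  have h2 : Submodule.map a₂ U ≤ U := by
    rintro _ ⟨x, hx, rfl⟩
    have hx' : g x = x := (hmem x).mp hx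
    rw [hmem, comm₂, hx']
  have htop : U = ⊤ := hnd.1 U hb h1 h2
  ext x
  have hx : x ∈ U := htop ▸ Submodule.mem_top
  simpa using (hmem x).mp hx
end

section
/- Composition of the 'boxplus' block matrices respects the integrability condition: given ADHM data (a₁',a₂',b',c') and (a₁'',a₂'',b'',c'') for rank-1 spaces W' = W'' = ℂ (so a's are scalars) with b'c' = 0 = b''c'' and scalars x₁,x₂,y₁,y₂ with a₁' + x₁ ≠ a₁'' + y₁, the 2×2 block datum A₁ = diag(a₁'+x₁, a₁''+y₁), A₂ = [[a₂'+x₂, b'c''/(a₁''+y₁-a₁'-x₁)],[b''c'/(a₁'+x₁-a₁''-y₁), a₂''+y₂]], B = (b';b''), C = (c', c'') satisfies the integrability condition [A₁,A₂] + BC = 0. -/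
/-- The `boxplus` block construction respects the integrability condition.  Given
rank-one ADHM data (`W' = W'' = ℂ`, so `a₁',a₂',a₁'',a₂''` are scalars) with
`b'c' = 0`, `b''c'' = 0`, and translation parameters `x₁,x₂,y₁,y₂` with
`a₁' + x₁ ≠ a₁'' + y₁`, the 2×2 block datum
`A₁ = diag(a₁'+x₁, a₁''+y₁)`,
`A₂ = [[a₂'+x₂, b'c''/(a₁''+y₁-a₁'-x₁)], [b''c'/(a₁'+x₁-a₁''-y₁), a₂''+y₂]]`,
`B = (b'; b'')`, `C = (c', c'')` satisfies `[A₁,A₂] + BC = 0`. -/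
theorem adhm_boxplus_integrability
    {V : Type*} [AddCommGroup V] [Module ℂ V]
    (a₁' a₂' a₁'' a₂'' x₁ x₂ y₁ y₂ : ℂ)
    (b' b'' : V →ₗ[ℂ] ℂ) (c' c'' : ℂ →ₗ[ℂ] V)
    (hb' : b' (c' 1) = 0) (hb'' : b'' (c'' 1) = 0)
    (hne : a₁' + x₁ ≠ a₁'' + y₁) :
    let A₁ : (Fin 2 → ℂ) →ₗ[ℂ] (Fin 2 → ℂ) :=
      Matrix.toLin' !![a₁' + x₁, 0; 0, a₁'' + y₁]
    let A₂ : (Fin 2 → ℂ) →ₗ[ℂ] (Fin 2 → ℂ) :=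
      Matrix.toLin' !![a₂' + x₂, b' (c'' 1) / (a₁'' + y₁ - a₁' - x₁);
                       b'' (c' 1) / (a₁' + x₁ - a₁'' - y₁), a₂'' + y₂]
    let B : V →ₗ[ℂ] (Fin 2 → ℂ) := LinearMap.pi ![b', b'']
    let C : (Fin 2 → ℂ) →ₗ[ℂ] V := c' ∘ₗ LinearMap.proj 0 + c'' ∘ₗ LinearMap.proj 1
    A₁ ∘ₗ A₂ - A₂ ∘ₗ A₁ + B ∘ₗ C = 0 := by
  intro A₁ A₂ B C
  have h1 : a₁'' + y₁ - a₁' - x₁ ≠ 0 := by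
    intro h; apply hne; linear_combination -h
  have h2 : a₁' + x₁ - a₁'' - y₁ ≠ 0 := by
    intro h; apply hne; linear_combination h
  ext v i
  fin_cases v <;> fin_cases i <;>
    simp [A₁, A₂, B, C, LinearMap.add_apply, LinearMap.comp_apply,
      LinearMap.sub_apply, Matrix.toLin'_apply, Matrix.mulVec, dotProduct,
      LinearMap.pi_apply, LinearMap.proj_apply, Pi.single_apply,
      Fin.sum_univ_two, hb', hb''] <;>
    (try field_simp) <;> ring
end
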